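/- Let S_1, …, S_m be statistics with continuous null survival functions G_1, …, G_m, and define the omnibus statistic S_o = min_j G_j(S_j). If each event {S_j < G_j^{-1}(s)} can be written as a cross-boundary event {P_{(i)} > u_{ji}(s) for all i}, then the survival function of S_o satisfies P(S_o > s) = P(P_{(i)} > u_i*(s) for all i = 1,…,n), where u_i*(s) = max_j u_{ji}(s). -/

import Mathlib

open MeasureTheory Finset

/-- Omnibus (double-adaptation) test: if each statistic `S j` has continuous strictly
decreasing null survival function `G j` (with inverse `Ginv j`), and each event
`{S j < Ginv j s}` is a cross-boundary event `{∀ i, P i > u j i s}`, then the omnibus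
statistic `S_o = min_j G j (S j)` satisfies
`P(S_o > s) = P(∀ i, P i > max_j u j i s)`. -/
theorem stmt_18 {Ω : Type*} [MeasureSpace Ω] {n m : ℕ}
    (P : Fin n → Ω → ℝ)
    (S : Fin (m + 1) → Ω → ℝ)
    (G : Fin (m + 1) → ℝ → ℝ) (hG : ∀ j, StrictAnti (G j))
    (Ginv : Fin (m + 1) → ℝ → ℝ) (hGinv : ∀ j s, G j (Ginv j s) = s)
    (u : Fin (m + 1) → Fin n → ℝ → ℝ)
    (hcross : ∀ j s, {ω : Ω | S j ω < Ginv j s} = {ω : Ω | ∀ i, u j i s < P i ω})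
    (So : Ω → ℝ)
    (hSo : ∀ ω, So ω = Finset.univ.inf' Finset.univ_nonempty fun j => G j (S j ω))
    (s : ℝ) :
    volume {ω : Ω | s < So ω}
      = volume {ω : Ω |
          ∀ i, (Finset.univ.sup' Finset.univ_nonempty fun j => u j i s) < P i ω} := by
  congr 1
  ext ω
  have key : ∀ j, (s < G j (S j ω)) ↔ ∀ i, u j i s < P i ω := by
    intro j
    have h1 : (s < G j (S j ω)) ↔ S j ω < Ginv j s := by
      nth_rewrite 1 [← hGinv j s]
      exact (hG j).lt_iff_gt
    rw [h1]
    exact Set.ext_iff.mp (hcross j s) ω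
  simp only [Set.mem_setOf_eq, hSo, lt_inf'_iff, Finset.sup'_lt_iff, Finset.mem_univ,
    true_implies, key]
  exact forall_comm
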